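/- Let n ≥ 1 and let C = ∏_{k=1}^{N} U(θ_k)_{i_k j_k} be any finite product of exchange gates on (ℂ²)^⊗n, where U(θ)_{ij} = cos θ·I + i sin θ·SWAP_{ij} and i_k ≠ j_k. Then: (i) C commutes with V^⊗n for every 2×2 unitary V; and (ii) C·(V^⊗n)|0…0⟩ = e^{i Σ_{k=1}^{N} θ_k} · (V^⊗n)|0…0⟩ for every 2×2 unitary V. In particular, taking V = H the Hadamard gate, ⟨0…0| H^⊗n C H^⊗n |0…0⟩ = e^{i Σ_k θ_k}, so the partition function of the associated six-vertex model with free boundary conditions equals 2ⁿ e^{i Σ_k θ_k}. -/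

import Mathlib

open Matrix Complex

noncomputable section

/-- The SWAP of tensor factors `i` and `j` on `(ℂ²)^⊗n`. -/
def swapM (n : ℕ) (i j : Fin n) : Matrix (Fin n → Fin 2) (Fin n → Fin 2) ℂ :=
  fun x y => if x = y ∘ Equiv.swap i j then 1 else 0

/-- The exchange gate `U(θ)_{ij} = exp(iθ·SWAP_{ij}) = cos θ·I + i sin θ·SWAP_{ij}`. -/
def exch (n : ℕ) (θ : ℝ) (i j : Fin n) : Matrix (Fin n → Fin 2) (Fin n → Fin 2) ℂ :=
  (Real.cos θ : ℂ) • (1 : Matrix (Fin n → Fin 2) (Fin n → Fin 2) ℂ)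
    + (Complex.I * (Real.sin θ : ℂ)) • swapM n i j

/-- The `n`-fold tensor (Kronecker) power `V^⊗n` of a one-qubit operator. -/
def tpow (n : ℕ) (V : Matrix (Fin 2) (Fin 2) ℂ) :
    Matrix (Fin n → Fin 2) (Fin n → Fin 2) ℂ :=
  fun x y => ∏ i, V (x i) (y i)

/-- The all-zeros computational basis state `|0…0⟩`. -/
def e0s (n : ℕ) : (Fin n → Fin 2) → ℂ :=
  fun x => if x = (fun _ => 0 : Fin n → Fin 2) then 1 else 0

/-- The Hadamard gate `H = (1/√2)[[1,1],[1,-1]]`. -/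
def Hgate : Matrix (Fin 2) (Fin 2) ℂ :=
  (((Real.sqrt 2)⁻¹ : ℝ) : ℂ) • !![1, 1; 1, -1]

lemma comp_swap_eq_iff {n : ℕ} (i j : Fin n) (x z : Fin n → Fin 2) :
    x = z ∘ Equiv.swap i j ↔ z = x ∘ Equiv.swap i j := by
  constructor <;> intro h <;> subst h <;> funext a <;>
    simp [Function.comp, Equiv.swap_apply_self]

lemma tpow_comp_swap {n : ℕ} (i j : Fin n) (V : Matrix (Fin 2) (Fin 2) ℂ)
    (x y : Fin n → Fin 2) :
    tpow n V (x ∘ Equiv.swap i j) y = tpow n V x (y ∘ Equiv.swap i j) := by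
  unfold tpow
  refine Fintype.prod_equiv (Equiv.swap i j) _ _ (fun a => ?_)
  simp [Function.comp, Equiv.swap_apply_self]

lemma swapM_comm_tpow {n : ℕ} (i j : Fin n) (V : Matrix (Fin 2) (Fin 2) ℂ) :
    swapM n i j * tpow n V = tpow n V * swapM n i j := by
  ext x y
  simp only [Matrix.mul_apply, swapM]
  have h1 : ∀ z : Fin n → Fin 2,
      (if x = z ∘ Equiv.swap i j then (1:ℂ) else 0) * tpow n V z y
        = if z = x ∘ Equiv.swap i j then tpow n V z y else 0 := by
    intro z
    rw [if_congr (comp_swap_eq_iff i j x z) rfl rfl]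
    split <;> simp
  have h2 : ∀ z : Fin n → Fin 2,
      tpow n V x z * (if z = y ∘ Equiv.swap i j then (1:ℂ) else 0)
        = if z = y ∘ Equiv.swap i j then tpow n V x z else 0 := by
    intro z; split <;> simp
  simp only [h1, h2, Finset.sum_ite_eq', Finset.mem_univ, if_true]
  exact tpow_comp_swap i j V x y

lemma exch_comm_tpow {n : ℕ} (θ : ℝ) (i j : Fin n) (V : Matrix (Fin 2) (Fin 2) ℂ) :
    exch n θ i j * tpow n V = tpow n V * exch n θ i j := by
  unfold exch
  simp only [add_mul, mul_add, Matrix.smul_mul, Matrix.mul_smul, one_mul, mul_one,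
    swapM_comm_tpow]

/-- `(V^⊗n)|0…0⟩` is invariant under SWAPs. -/
lemma tpow_mulVec_e0s_swap {n : ℕ} (i j : Fin n) (V : Matrix (Fin 2) (Fin 2) ℂ)
    (x : Fin n → Fin 2) :
    (tpow n V *ᵥ e0s n) (x ∘ Equiv.swap i j) = (tpow n V *ᵥ e0s n) x := by
  have key : ∀ w : Fin n → Fin 2, (tpow n V *ᵥ e0s n) w = ∏ a, V (w a) 0 := by
    intro w
    simp only [Matrix.mulVec, dotProduct, e0s, mul_ite, mul_one, mul_zero,
      Finset.sum_ite_eq', Finset.mem_univ, if_true]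
    rfl
  rw [key, key]
  exact Equiv.prod_comp (Equiv.swap i j) (fun a => V (x a) 0)

lemma exch_mulVec {n : ℕ} (θ : ℝ) (i j : Fin n) (v : (Fin n → Fin 2) → ℂ)
    (hv : ∀ x, v (x ∘ Equiv.swap i j) = v x) :
    exch n θ i j *ᵥ v = Complex.exp (Complex.I * (θ : ℂ)) • v := by
  have hswap : swapM n i j *ᵥ v = v := by
    funext x
    simp only [Matrix.mulVec, dotProduct, swapM]
    have h1 : ∀ z : Fin n → Fin 2,
        (if x = z ∘ Equiv.swap i j then (1:ℂ) else 0) * v z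
          = if z = x ∘ Equiv.swap i j then v z else 0 := by
      intro z
      rw [if_congr (comp_swap_eq_iff i j x z) rfl rfl]
      split <;> simp
    simp only [h1, Finset.sum_ite_eq', Finset.mem_univ, if_true]
    exact hv x
  unfold exch
  rw [Matrix.add_mulVec, Matrix.smul_mulVec, Matrix.smul_mulVec,
    Matrix.one_mulVec, hswap]
  funext x
  have : Complex.exp (Complex.I * (θ : ℂ)) = (Real.cos θ : ℂ) + Complex.I * (Real.sin θ : ℂ) := by
    rw [mul_comm, Complex.exp_mul_I]
    push_cast
    ring
  simp only [Pi.add_apply, Pi.smul_apply, smul_eq_mul, this]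
  ring

lemma tpow_mul {n : ℕ} (A B : Matrix (Fin 2) (Fin 2) ℂ) :
    tpow n (A * B) = tpow n A * tpow n B := by
  ext x y
  simp only [tpow, Matrix.mul_apply]
  rw [Finset.prod_univ_sum]
  refine Finset.sum_congr rfl (fun z _ => ?_)
  rw [Finset.prod_mul_distrib]

lemma tpow_one {n : ℕ} : tpow n (1 : Matrix (Fin 2) (Fin 2) ℂ) = 1 := by
  ext x y
  simp only [tpow, Matrix.one_apply]
  rw [Finset.prod_boole]
  simp [funext_iff, eq_comm]

lemma Hgate_mul_Hgate : Hgate * Hgate = 1 := by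
  have h2 : ((Real.sqrt 2 : ℝ) : ℂ)⁻¹ * ((Real.sqrt 2 : ℝ) : ℂ)⁻¹ = (2 : ℂ)⁻¹ := by
    rw [← mul_inv, ← Complex.ofReal_mul, Real.mul_self_sqrt (by norm_num)]
    norm_num
  ext i j
  fin_cases i <;> fin_cases j <;>
    simp [Hgate, Matrix.mul_apply, Fin.sum_univ_two, Matrix.one_apply,
      Complex.ofReal_inv] <;>
    ring_nf <;>
    rw [show (((Real.sqrt 2:ℝ):ℂ))⁻¹ ^ 2
        = ((Real.sqrt 2:ℝ):ℂ)⁻¹ * ((Real.sqrt 2:ℝ):ℂ)⁻¹ from sq _] <;>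
    rw [h2] <;> norm_num

lemma prod_exch_mulVec (n : ℕ) (V : Matrix (Fin 2) (Fin 2) ℂ) :
    ∀ (N : ℕ) (θ : Fin N → ℝ) (idx : Fin N → Fin n × Fin n),
      (List.ofFn fun k : Fin N => exch n (θ k) (idx k).1 (idx k).2).prod
          *ᵥ (tpow n V *ᵥ e0s n)
        = Complex.exp (Complex.I * ((∑ k, θ k : ℝ) : ℂ)) • (tpow n V *ᵥ e0s n) := by
  intro N
  induction N with
  | zero => intro θ idx; simp
  | succ N ih =>
    intro θ idx
    rw [List.ofFn_succ, List.prod_cons, ← Matrix.mulVec_mulVec,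
      ih (fun k => θ k.succ) (fun k => idx k.succ),
      Matrix.mulVec_smul,
      exch_mulVec (θ 0) (idx 0).1 (idx 0).2 _
        (tpow_mulVec_e0s_swap (idx 0).1 (idx 0).2 V),
      smul_smul, ← Complex.exp_add, Fin.sum_univ_succ]
    congr 2
    push_cast
    ring

/-- Any product `C` of exchange gates commutes with `V^⊗n` for every unitary `V`,
satisfies `C (V^⊗n)|0…0⟩ = e^{iΣθ_k}(V^⊗n)|0…0⟩`, and hence
`⟨0…0|H^⊗n C H^⊗n|0…0⟩ = e^{iΣθ_k}`, so the free-boundary six-vertex partition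
function equals `2ⁿ e^{iΣθ_k}`. -/
theorem exchange_circuit_phase (n N : ℕ) (hn : 1 ≤ n)
    (θ : Fin N → ℝ) (idx : Fin N → Fin n × Fin n)
    (hidx : ∀ k, (idx k).1 ≠ (idx k).2) :
    let Ccirc := (List.ofFn fun k : Fin N => exch n (θ k) (idx k).1 (idx k).2).prod
    (∀ V : Matrix (Fin 2) (Fin 2) ℂ, V ∈ Matrix.unitaryGroup (Fin 2) ℂ →
        Ccirc * tpow n V = tpow n V * Ccirc)
    ∧ (∀ V : Matrix (Fin 2) (Fin 2) ℂ, V ∈ Matrix.unitaryGroup (Fin 2) ℂ →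
        Ccirc *ᵥ (tpow n V *ᵥ e0s n)
          = Complex.exp (Complex.I * ((∑ k, θ k : ℝ) : ℂ)) • (tpow n V *ᵥ e0s n))
    ∧ (e0s n ⬝ᵥ ((tpow n Hgate * Ccirc * tpow n Hgate) *ᵥ e0s n)
          = Complex.exp (Complex.I * ((∑ k, θ k : ℝ) : ℂ)))
    ∧ ((2 ^ n : ℂ) * (e0s n ⬝ᵥ ((tpow n Hgate * Ccirc * tpow n Hgate) *ᵥ e0s n))
          = (2 ^ n : ℂ) * Complex.exp (Complex.I * ((∑ k, θ k : ℝ) : ℂ))) := by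
  intro Ccirc
  -- (i) commutation with any V^⊗n
  have hcomm : ∀ V : Matrix (Fin 2) (Fin 2) ℂ, Ccirc * tpow n V = tpow n V * Ccirc := by
    intro V
    refine Commute.list_prod_left _ _ (fun x hx => ?_)
    obtain ⟨k, rfl⟩ := List.mem_ofFn.mp hx
    exact exch_comm_tpow (θ k) (idx k).1 (idx k).2 V
  -- (ii) eigenvector property, for arbitrary V
  have hvec : ∀ V : Matrix (Fin 2) (Fin 2) ℂ,
      Ccirc *ᵥ (tpow n V *ᵥ e0s n)
        = Complex.exp (Complex.I * ((∑ k, θ k : ℝ) : ℂ)) • (tpow n V *ᵥ e0s n) := by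
    intro V
    exact prod_exch_mulVec n V N θ idx
  refine ⟨fun V _ => hcomm V, fun V _ => hvec V, ?_, ?_⟩
  · have he : e0s n ⬝ᵥ e0s n = 1 := by
      simp only [dotProduct, e0s, ite_mul, one_mul, zero_mul,
        Finset.sum_ite_eq', Finset.mem_univ, if_true]
    have hHH : tpow n Hgate * tpow n Hgate = 1 := by
      rw [← tpow_mul, Hgate_mul_Hgate, tpow_one]
    calc e0s n ⬝ᵥ ((tpow n Hgate * Ccirc * tpow n Hgate) *ᵥ e0s n)
        = e0s n ⬝ᵥ (tpow n Hgate *ᵥ (Ccirc *ᵥ (tpow n Hgate *ᵥ e0s n))) := by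
          rw [Matrix.mulVec_mulVec, Matrix.mulVec_mulVec]
      _ = e0s n ⬝ᵥ (tpow n Hgate *ᵥ
            (Complex.exp (Complex.I * ((∑ k, θ k : ℝ) : ℂ)) • (tpow n Hgate *ᵥ e0s n))) := by
          rw [hvec Hgate]
      _ = Complex.exp (Complex.I * ((∑ k, θ k : ℝ) : ℂ)) *
            (e0s n ⬝ᵥ ((tpow n Hgate * tpow n Hgate) *ᵥ e0s n)) := by
          rw [Matrix.mulVec_smul, Matrix.mulVec_mulVec, dotProduct_smul, smul_eq_mul]
      _ = Complex.exp (Complex.I * ((∑ k, θ k : ℝ) : ℂ)) := by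
          rw [hHH, Matrix.one_mulVec, he, mul_one]
  · have he : e0s n ⬝ᵥ e0s n = 1 := by
      simp only [dotProduct, e0s, ite_mul, one_mul, zero_mul,
        Finset.sum_ite_eq', Finset.mem_univ, if_true]
    have hHH : tpow n Hgate * tpow n Hgate = 1 := by
      rw [← tpow_mul, Hgate_mul_Hgate, tpow_one]
    congr 1
    calc e0s n ⬝ᵥ ((tpow n Hgate * Ccirc * tpow n Hgate) *ᵥ e0s n)
        = e0s n ⬝ᵥ (tpow n Hgate *ᵥ (Ccirc *ᵥ (tpow n Hgate *ᵥ e0s n))) := by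
          rw [Matrix.mulVec_mulVec, Matrix.mulVec_mulVec]
      _ = e0s n ⬝ᵥ (tpow n Hgate *ᵥ
            (Complex.exp (Complex.I * ((∑ k, θ k : ℝ) : ℂ)) • (tpow n Hgate *ᵥ e0s n))) := by
          rw [hvec Hgate]
      _ = Complex.exp (Complex.I * ((∑ k, θ k : ℝ) : ℂ)) *
            (e0s n ⬝ᵥ ((tpow n Hgate * tpow n Hgate) *ᵥ e0s n)) := by
          rw [Matrix.mulVec_smul, Matrix.mulVec_mulVec, dotProduct_smul, smul_eq_mul]
      _ = Complex.exp (Complex.I * ((∑ k, θ k : ℝ) : ℂ)) := by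
          rw [hHH, Matrix.one_mulVec, he, mul_one]
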